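/- Let n ≥ 2 and f(k) = n^k + 1. Then for every d ≥ 1 and μ ≥ 0, 𝒩(d,μ,f) = Σ_{ℓ=0}^{min(d,μ)} Σ_{k=0}^{μ−ℓ} C(d,ℓ) · (−1)^ℓ · (2n)^ℓ · (n+1)^{d−ℓ} · C(d+k−1, k) · C(d+μ−ℓ−k−1, μ−ℓ−k) · n^k (an identity in ℤ). -/

import Mathlib

/-- Multi-indices `i : Fin d → ℕ` with `i k ≥ 1` for all `k` and `∑ k, i k = d + μ`. -/
def smolyakIndices (d μ : ℕ) : Finset (Fin d → ℕ) :=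
  (Fintype.piFinset fun _ => Finset.Icc 1 (d + μ)).filter fun i => ∑ k, i k = d + μ

/-- `𝒩(d, μ, f) = ∑_{|i| = d + μ, i ≥ 1} ∏ₖ f(iₖ)`. -/
def calN (f : ℕ → ℕ) (d μ : ℕ) : ℕ :=
  ∑ i ∈ smolyakIndices d μ, ∏ k, f (i k)

open PowerSeries Finset in
noncomputable def myG (a : ℤ) : PowerSeries ℤ :=
  PowerSeries.mk fun j => if j = 0 then 0 else a ^ j + 1

open PowerSeries Finset in
lemma key (a : ℤ) :
    myG a * ((1 - C a * X) * (1 - X)) = X * (C (a + 1) - C (2 * a) * X) := by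
  set c1 : ℤ := a + 1 with hc1
  set c2 : ℤ := 2 * a with hc2
  have l : myG a * ((1 - C a * X) * (1 - X)) =
      myG a - X ^ 1 * myG a - C a * (X ^ 1 * myG a) + C a * (X ^ 2 * myG a) := by
    ring
  have r : X * (C c1 - C c2 * X) = C c1 * X ^ 1 - C c2 * X ^ 2 := by ring
  rw [l, r]
  ext m
  simp only [map_sub, map_add, coeff_C_mul, coeff_X_pow_mul', coeff_X_pow, myG, coeff_mk]
  rcases m with _ | _ | _ | k
  · norm_num
  · norm_num [hc1]
  · norm_num [hc1, hc2]; ring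
  · have h1 : k + 1 + 1 + 1 - 1 = k + 2 := by omega
    have h2 : k + 1 + 1 + 1 - 2 = k + 1 := by omega
    rw [h1, h2, if_pos (by omega : (1:ℕ) ≤ k+1+1+1), if_pos (by omega : (2:ℕ) ≤ k+1+1+1),
      if_neg (by omega : ¬(k+1+1+1 = 0)), if_neg (by omega : ¬(k+2 = 0)),
      if_neg (by omega : ¬(k+1 = 0)), if_neg (by omega : ¬(k+1+1+1 = 1)),
      if_neg (by omega : ¬(k+1+1+1 = 2))]
    ring

open PowerSeries Finset in
lemma factored (a : ℤ) :
    myG a = X * (C (a + 1) - C (2 * a) * X) * (rescale a (PowerSeries.mk 1) * PowerSeries.mk 1) := by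
  have hu : (PowerSeries.mk 1 : PowerSeries ℤ) * (1 - X) = 1 := mk_one_mul_one_sub_eq_one ℤ
  have hv : rescale a (PowerSeries.mk 1) * (1 - C a * X) = 1 := by
    have h := congrArg (rescale a) hu
    rwa [map_mul, map_sub, map_one, rescale_X] at h
  have h2 : ((1 - C a * X) * (1 - X)) * (rescale a (PowerSeries.mk 1) * PowerSeries.mk 1) = 1 := by
    have h3 : ((1 - C a * X) * (1 - X)) * (rescale a (PowerSeries.mk 1) * PowerSeries.mk 1)
        = (rescale a (PowerSeries.mk 1) * (1 - C a * X)) * ((PowerSeries.mk 1) * (1 - X)) := by ring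
    rw [h3, hv, hu, one_mul]
  calc myG a = myG a * (((1 - C a * X) * (1 - X)) * (rescale a (PowerSeries.mk 1) * PowerSeries.mk 1)) := by
        rw [h2, mul_one]
    _ = (myG a * ((1 - C a * X) * (1 - X))) * (rescale a (PowerSeries.mk 1) * PowerSeries.mk 1) := by ring
    _ = X * (C (a + 1) - C (2 * a) * X) * (rescale a (PowerSeries.mk 1) * PowerSeries.mk 1) := by rw [key]

open PowerSeries Finset in
lemma coeff_main (a : ℤ) (e μ : ℕ) :
    coeff (e + 1 + μ) (myG a ^ (e + 1)) =
      ∑ ℓ ∈ range (e + 1 + 1), (if ℓ ≤ μ then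
        ((-1) ^ ℓ * (2 * a) ^ ℓ * (a + 1) ^ (e + 1 - ℓ) * ((e + 1).choose ℓ : ℤ)) *
          ∑ k ∈ range (μ - ℓ + 1),
            a ^ k * ((e + k).choose e : ℤ) * ((e + (μ - ℓ - k)).choose e : ℤ)
      else 0) := by
  set M : PowerSeries ℤ := mk fun k => ((e + k).choose e : ℤ) with hM
  set P : PowerSeries ℤ := rescale a M * M with hP
  have hMk : (PowerSeries.mk 1 : PowerSeries ℤ) ^ (e + 1) = M := mk_one_pow_eq_mk_choose_add ℤ e
  have hA : myG a ^ (e + 1) =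
      X ^ (e + 1) * ((C (a + 1) - C (2 * a) * X) ^ (e + 1) * P) := by
    rw [factored, mul_pow, mul_pow, mul_pow, ← map_pow, hMk, hP]
    ring
  have hcP : ∀ m : ℕ, coeff m P =
      ∑ k ∈ range (m + 1), a ^ k * ((e + k).choose e : ℤ) * ((e + (m - k)).choose e : ℤ) := by
    intro m
    rw [hP, coeff_mul, Finset.Nat.sum_antidiagonal_eq_sum_range_succ_mk]
    refine Finset.sum_congr rfl fun k _ => ?_
    rw [coeff_rescale, hM, coeff_mk, coeff_mk]
  rw [hA]
  have hidx : e + 1 + μ = μ + (e + 1) := by omega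
  rw [hidx, coeff_X_pow_mul]
  have hbin : (C (a + 1) - C (2 * a) * X) ^ (e + 1) =
      ∑ ℓ ∈ range (e + 1 + 1),
        C ((-1) ^ ℓ * (2 * a) ^ ℓ * (a + 1) ^ (e + 1 - ℓ) * ((e + 1).choose ℓ : ℤ)) * X ^ ℓ := by
    have h0 : C (a + 1) - C (2 * a) * X = -(C (2 * a) * X) + C (a + 1) := by ring
    rw [h0, add_pow]
    refine Finset.sum_congr rfl fun ℓ _ => ?_
    rw [neg_pow, mul_pow]
    have hcast : ((((e + 1).choose ℓ : ℕ)) : PowerSeries ℤ) = C (((e + 1).choose ℓ : ℕ) : ℤ) := by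
      rw [map_natCast]
    rw [hcast]
    simp only [map_mul, map_pow, map_neg, map_one]
    ring
  rw [hbin, Finset.sum_mul, map_sum]
  refine Finset.sum_congr rfl fun ℓ _ => ?_
  rw [mul_assoc, coeff_C_mul, coeff_X_pow_mul']
  split_ifs with h
  · rw [hcP (μ - ℓ), Finset.mul_sum]
  · rw [mul_zero]

open PowerSeries Finset in
lemma step1 (n d μ : ℕ) :
    (calN (fun k => n ^ k + 1) d μ : ℤ) =
      PowerSeries.coeff (d + μ) (myG (n : ℤ) ^ d) := by
  have hpow : myG (n : ℤ) ^ d = ∏ _k : Fin d, myG (n : ℤ) := by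
    rw [Finset.prod_const, Finset.card_univ, Fintype.card_fin]
  rw [hpow, PowerSeries.coeff_prod]
  have hzero : ∀ l ∈ (finsuppAntidiag (univ : Finset (Fin d)) (d + μ)),
      (∏ i : Fin d, (PowerSeries.coeff (l i)) (myG (n : ℤ))) ≠ 0 → (∀ i : Fin d, 1 ≤ l i) := by
    intro l _ hne i
    by_contra h
    push_neg at h
    interval_cases h' : l i
    apply hne
    apply Finset.prod_eq_zero (Finset.mem_univ i)
    simp [h', myG]
  rw [← Finset.sum_filter_of_ne hzero]
  unfold calN
  push_cast
  refine Finset.sum_nbij' (fun i => Finsupp.equivFunOnFinite.symm i) (fun l => ⇑l) ?_ ?_ ?_ ?_ ?_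
  · intro i hi
    simp only [smolyakIndices, Finset.mem_filter, Fintype.mem_piFinset, Finset.mem_Icc] at hi
    simp only [Finset.mem_filter, mem_finsuppAntidiag]
    refine ⟨⟨?_, ?_⟩, ?_⟩
    · rw [← hi.2]
      exact Finset.sum_congr rfl fun k _ => by simp
    · exact Finset.subset_univ _
    · intro k; simpa using (hi.1 k).1
  · intro l hl
    simp only [Finset.mem_filter, mem_finsuppAntidiag] at hl
    simp only [smolyakIndices, Finset.mem_filter, Fintype.mem_piFinset, Finset.mem_Icc]
    refine ⟨fun k => ⟨hl.2 k, ?_⟩, hl.1.1⟩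
    · rw [← hl.1.1]
      exact Finset.single_le_sum (f := fun j => l j) (fun j _ => Nat.zero_le _) (Finset.mem_univ k)
  · intro i _; ext k; simp
  · intro l _; simp
  · intro i hi
    simp only [smolyakIndices, Finset.mem_filter, Fintype.mem_piFinset, Finset.mem_Icc] at hi
    refine Finset.prod_congr rfl fun k _ => ?_
    have h1 : 1 ≤ i k := (hi.1 k).1
    simp only [Finsupp.coe_equivFunOnFinite_symm, myG, coeff_mk]
    rw [if_neg (by omega)]

/-- For `f(k) = nᵏ + 1` (with `n ≥ 2`),
`𝒩(d, μ, f) = ∑_{ℓ=0}^{min(d,μ)} ∑_{k=0}^{μ-ℓ} C(d,ℓ) (-1)ˡ (2n)ˡ (n+1)^(d-ℓ)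
  C(d+k-1, k) C(d+μ-ℓ-k-1, μ-ℓ-k) nᵏ` (an identity in `ℤ`). -/
theorem calN_of_pow_add_one (n : ℕ) (hn : 2 ≤ n) (d μ : ℕ) (hd : 1 ≤ d) :
    (calN (fun k => n ^ k + 1) d μ : ℤ) =
      ∑ ℓ ∈ Finset.range (min d μ + 1), ∑ k ∈ Finset.range (μ - ℓ + 1),
        (d.choose ℓ : ℤ) * (-1) ^ ℓ * (2 * (n : ℤ)) ^ ℓ * ((n : ℤ) + 1) ^ (d - ℓ) *
          ((d + k - 1).choose k : ℤ) * ((d + μ - ℓ - k - 1).choose (μ - ℓ - k) : ℤ) *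
          (n : ℤ) ^ k := by
  obtain ⟨e, rfl⟩ : ∃ e, d = e + 1 := ⟨d - 1, by omega⟩
  rw [step1, coeff_main]
  have hsub : Finset.range (min (e + 1) μ + 1) ⊆ Finset.range (e + 1 + 1) :=
    Finset.range_subset_range.mpr (by omega)
  have hvan : ∀ x ∈ Finset.range (e + 1 + 1), x ∉ Finset.range (min (e + 1) μ + 1) →
      (if x ≤ μ then
        ((-1) ^ x * (2 * (n : ℤ)) ^ x * ((n : ℤ) + 1) ^ (e + 1 - x) * ((e + 1).choose x : ℤ)) *
          ∑ k ∈ Finset.range (μ - x + 1),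
            (n : ℤ) ^ k * ((e + k).choose e : ℤ) * ((e + (μ - x - k)).choose e : ℤ)
      else 0) = 0 := by
    intro x hx hx'
    simp only [Finset.mem_range] at hx hx'
    rw [if_neg (by omega)]
  rw [← Finset.sum_subset hsub hvan]
  refine Finset.sum_congr rfl fun ℓ hℓ => ?_
  simp only [Finset.mem_range] at hℓ
  have hℓμ : ℓ ≤ μ := by omega
  rw [if_pos hℓμ, Finset.mul_sum]
  refine Finset.sum_congr rfl fun k hk => ?_
  simp only [Finset.mem_range] at hk
  have h1 : e + 1 + k - 1 = e + k := by omega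
  have h2 : e + 1 + μ - ℓ - k - 1 = e + (μ - ℓ - k) := by omega
  rw [h1, h2, Nat.choose_symm_add, Nat.choose_symm_add]
  ring
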